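/- Let φ be a (3,B2)-SAT instance with variables x_1, …, x_n and clauses C_1, …, C_m, each clause containing exactly 3 literals, and each variable occurring exactly twice as a positive literal and exactly twice as a negative literal. Define h(x_i) = z_i and h(¬x_i) = z̄_i. Construct the BNPG game with symmetric altruism: V = {z_i, z̄_i, b_i : i∈[n]} ∪ {y_j : j∈[m]}; E = {{y_j, h(l^j_1)}, {y_j, h(l^j_2)}, {y_j, h(l^j_3)} : C_j = (l^j_1 ∨ l^j_2 ∨ l^j_3), j∈[m]} ∪ {{z_i, b_i}, {b_i, z̄_i} : i∈[n]}; a = 2; c_v = 15 for all v ∈ V; g_{y_j}(x) = x, g_{z_i}(x) = g_{z̄_i}(x) = 10x, g_{b_i}(x) = 2x. Let the target profile x* be given by x*_{y_j} = 1 for all j, x*_{b_i} = 1 and x*_{z_i} = x*_{z̄_i} = 0 for all i. Then φ is satisfiable if and only if there exists a set E'' of undirected edges, each edge of E'' being an edge of E, such that x* is a pure strategy Nash equilibrium of the BNPG game with symmetric altruism (G, (V,E''), (g_v), (c_v), 2). -/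

import Mathlib

open Finset

/-- `Δg(t) = g(t+1) - g(t)`. -/
def dg (g : ℕ → ℝ) (t : ℕ) : ℝ := g (t + 1) - g t

/-- Number of `G`-neighbors of `v` playing 1 in the profile `x`. -/
def nv {W : Type*} [Fintype W] [DecidableEq W] (G : SimpleGraph W) [DecidableRel G.Adj]
    (x : W → Bool) (v : W) : ℕ :=
  ((G.neighborFinset v).filter (fun u => x u = true)).card

/-- Utility of player `v` in a BNPG game with altruism: input graph `G`,
altruistic (out-)neighborhoods `N`, externality functions `g`, costs `c`,
altruism parameter `a`. -/
def util {W : Type*} [Fintype W] [DecidableEq W] (G : SimpleGraph W) [DecidableRel G.Adj]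
    (N : W → Finset W) (g : W → ℕ → ℝ) (c : W → ℝ) (a : ℝ)
    (x : W → Bool) (v : W) : ℝ :=
  g v ((x v).toNat + nv G x v)
    + a * ∑ u ∈ N v, g u ((x u).toNat + nv G x u)
    - c v * (x v).toNat

/-- Pure strategy Nash equilibrium of a BNPG game with altruism. -/
def isPSNE {W : Type*} [Fintype W] [DecidableEq W] (G : SimpleGraph W) [DecidableRel G.Adj]
    (N : W → Finset W) (g : W → ℕ → ℝ) (c : W → ℝ) (a : ℝ) (x : W → Bool) : Prop :=
  ∀ v : W, ∀ b : Bool,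
    util G N g c a x v ≥ util G N g c a (Function.update x v b) v

/-- Vertex set of the (3,B2)-SAT reduction: `Sum.inl (i, 0)` is `z_i`,
`Sum.inl (i, 1)` is `z̄_i`, `Sum.inl (i, 2)` is `b_i`, and `Sum.inr j` is `y_j`. -/
abbrev VS (nn m : ℕ) := (Fin nn × Fin 3) ⊕ Fin m

/-- `h` maps the literal `(i, true) = x_i` to `z_i = Sum.inl (i, 0)` and the literal
`(i, false) = ¬x_i` to `z̄_i = Sum.inl (i, 1)`. -/
def litV {nn m : ℕ} (l : Fin nn × Bool) : VS nn m :=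
  Sum.inl (l.1, if l.2 then (0 : Fin 3) else 1)

/-- Adjacency of the input network of the SAT reduction: each clause vertex `y_j` is
adjacent to the vertices of its three literals, and each `b_i` is adjacent to `z_i`
and `z̄_i`. -/
def adjS {nn m : ℕ} (Cl : Fin m → Fin 3 → Fin nn × Bool) : VS nn m → VS nn m → Bool
  | Sum.inr j, Sum.inl w => decide (∃ k : Fin 3, litV (Cl j k) = (Sum.inl w : VS nn m))
  | Sum.inl w, Sum.inr j => decide (∃ k : Fin 3, litV (Cl j k) = (Sum.inl w : VS nn m))
  | Sum.inl (i, t), Sum.inl (i', t') =>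
      decide (i = i') &&
        ((decide (t = 2) && (decide (t' = 0) || decide (t' = 1))) ||
         (decide (t' = 2) && (decide (t = 0) || decide (t = 1))))
  | _, _ => false

/-- The input network of the SAT reduction (maximum degree 3). -/
def GS {nn m : ℕ} (Cl : Fin m → Fin 3 → Fin nn × Bool) : SimpleGraph (VS nn m) where
  Adj a b := adjS Cl a b = true
  symm := by
    constructor
    rintro (⟨i, t⟩ | j) (⟨i', t'⟩ | j') h <;> simp_all [adjS] <;> tauto
  loopless := by
    constructor
    rintro (⟨i, t⟩ | j) h <;> simp [adjS] at h
    omega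

instance {nn m : ℕ} (Cl : Fin m → Fin 3 → Fin nn × Bool) :
    DecidableRel (GS Cl).Adj :=
  fun a b => inferInstanceAs (Decidable (adjS Cl a b = true))

/-- Externality functions: `g_{y_j}(x) = x`, `g_{z_i}(x) = g_{z̄_i}(x) = 10x`,
`g_{b_i}(x) = 2x`. -/
def gS {nn m : ℕ} : VS nn m → ℕ → ℝ
  | Sum.inl (_, t) => fun x => if t = 2 then 2 * x else 10 * x
  | Sum.inr _ => fun x => (x : ℝ)

section helpers
variable {W : Type*} [Fintype W] [DecidableEq W]

lemma nv_update_self (G : SimpleGraph W) [DecidableRel G.Adj] (x : W → Bool) (v : W) (b : Bool) :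
    nv G (Function.update x v b) v = nv G x v := by
  unfold nv
  congr 1
  apply Finset.filter_congr
  intro u hu
  rw [Function.update_of_ne (G.ne_of_adj ((SimpleGraph.mem_neighborFinset _ _ _).1 hu)).symm]

lemma card_filter_split {S : Finset W} {v : W} (hv : v ∈ S) (p : W → Bool) :
    (S.filter (fun w => p w = true)).card
      = ((S.erase v).filter (fun w => p w = true)).card + (p v).toNat := by
  conv_lhs => rw [← Finset.insert_erase hv]
  rw [Finset.filter_insert]
  cases hp : p v
  · simp
  · simp only [if_true]
    rw [Finset.card_insert_of_notMem (by simp)]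
    simp

lemma nv_update_mem (G : SimpleGraph W) [DecidableRel G.Adj] (x : W → Bool) {u v : W}
    (h : G.Adj u v) (b : Bool) :
    nv G (Function.update x v b) u + (x v).toNat = nv G x u + b.toNat := by
  have hv : v ∈ G.neighborFinset u := by simpa using h
  unfold nv
  rw [card_filter_split hv, card_filter_split hv (p := x)]
  have he : ((G.neighborFinset u).erase v).filter (fun w => Function.update x v b w = true)
      = ((G.neighborFinset u).erase v).filter (fun w => x w = true) := by
    apply Finset.filter_congr
    intro w hw
    rw [Function.update_of_ne (Finset.mem_erase.1 hw).1]
  rw [he, Function.update_self]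
  omega

lemma util_diff (G : SimpleGraph W) [DecidableRel G.Adj]
    (N : W → Finset W) (lam : W → ℝ) (g : W → ℕ → ℝ)
    (hg : ∀ v k, g v k = lam v * k) (c : ℝ)
    (x : W → Bool) (v : W) (hN : ∀ u ∈ N v, G.Adj v u) (b : Bool) :
    util G N g (fun _ => c) 2 x v
      - util G N g (fun _ => c) 2 (Function.update x v b) v
    = (((x v).toNat : ℝ) - b.toNat) * (lam v + 2 * ∑ u ∈ N v, lam u - c) := by
  have h1 : ∀ u ∈ N v, (Function.update x v b) u = x u := by
    intro u hu
    exact Function.update_of_ne (fun h => G.irrefl (h ▸ hN u hu)) _ _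
  have h2 : ∀ u ∈ N v, ((nv G (Function.update x v b) u : ℝ))
      = nv G x u + b.toNat - (x v).toNat := by
    intro u hu
    have h := nv_update_mem G x (hN u hu).symm b
    have h' := congrArg (Nat.cast : ℕ → ℝ) h
    push_cast at h'
    linarith
  have e0 : ∑ u ∈ N v, g u ((x u).toNat + nv G x u)
      = ∑ u ∈ N v, lam u * (((x u).toNat : ℝ) + nv G x u) := by
    refine Finset.sum_congr rfl fun u hu => ?_
    rw [hg]; push_cast; ring
  have e1 : ∑ u ∈ N v, g u (((Function.update x v b) u).toNat + nv G (Function.update x v b) u)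
      = (∑ u ∈ N v, lam u * (((x u).toNat : ℝ) + nv G x u))
        + (∑ u ∈ N v, lam u) * ((b.toNat : ℝ) - (x v).toNat) := by
    rw [Finset.sum_mul, ← Finset.sum_add_distrib]
    refine Finset.sum_congr rfl fun u hu => ?_
    rw [hg, h1 u hu]
    push_cast
    rw [h2 u hu]
    ring
  unfold util
  rw [Function.update_self, nv_update_self, e0, e1, hg, hg]
  push_cast
  ring

end helpers

def lamS {nn m : ℕ} : VS nn m → ℝ
  | Sum.inl (_, t) => if t = 2 then 2 else 10
  | Sum.inr _ => 1

lemma gS_lam {nn m : ℕ} (v : VS nn m) (k : ℕ) : gS v k = lamS v * k := by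
  rcases v with ⟨i, t⟩ | j
  · simp only [gS, lamS]
    split_ifs <;> ring
  · simp [gS, lamS]

lemma lamS_nonneg {nn m : ℕ} (v : VS nn m) : 0 ≤ lamS v := by
  rcases v with ⟨i, t⟩ | j <;> simp only [lamS]
  · split_ifs <;> norm_num
  · norm_num

lemma adj_bz {nn m : ℕ} (Cl : Fin m → Fin 3 → Fin nn × Bool) (i : Fin nn) {t : Fin 3}
    (ht : t = 0 ∨ t = 1) : (GS Cl).Adj (Sum.inl (i, 2)) (Sum.inl (i, t)) := by
  show adjS Cl _ _ = true
  rcases ht with rfl | rfl <;> simp [adjS]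

lemma adj_yl {nn m : ℕ} (Cl : Fin m → Fin 3 → Fin nn × Bool) (j : Fin m) (k : Fin 3) :
    (GS Cl).Adj (Sum.inr j) (litV (Cl j k)) := by
  show adjS Cl _ _ = true
  simp only [litV, adjS, decide_eq_true_eq]
  exact decide_eq_true ⟨k, rfl⟩

lemma litV_ne_two {nn m : ℕ} (l : Fin nn × Bool) (i : Fin nn) :
    (litV l : VS nn m) ≠ Sum.inl (i, 2) := by
  simp only [litV, ne_eq, Sum.inl.injEq, Prod.mk.injEq, not_and]
  intro _
  rcases l.2 <;> simp

lemma adj_y_elim {nn m : ℕ} {Cl : Fin m → Fin 3 → Fin nn × Bool} {j : Fin m} {u : VS nn m}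
    (h : (GS Cl).Adj (Sum.inr j) u) : ∃ k : Fin 3, u = litV (Cl j k) := by
  rcases u with w | j'
  · have h' : adjS Cl (Sum.inr j) (Sum.inl w) = true := h
    simp only [adjS, decide_eq_true_eq] at h'
    obtain ⟨k, hk⟩ := h'
    exact ⟨k, hk.symm⟩
  · have h' : adjS Cl (Sum.inr j) (Sum.inr j') = true := h
    simp [adjS] at h'

lemma adj_b_elim {nn m : ℕ} {Cl : Fin m → Fin 3 → Fin nn × Bool} {i : Fin nn} {u : VS nn m}
    (h : (GS Cl).Adj (Sum.inl (i, 2)) u) :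
    ∃ t : Fin 3, (t = 0 ∨ t = 1) ∧ u = Sum.inl (i, t) := by
  rcases u with ⟨i', t'⟩ | j'
  · have h' : adjS Cl (Sum.inl (i, 2)) (Sum.inl (i', t')) = true := h
    simp only [adjS, Bool.and_eq_true, Bool.or_eq_true, decide_eq_true_eq] at h'
    obtain ⟨rfl, h2⟩ := h'
    refine ⟨t', ?_, rfl⟩
    rcases h2 with ⟨_, h2⟩ | ⟨_, h2⟩
    · tauto
    · exact absurd h2 (by decide)
  · have h' : adjS Cl (Sum.inl (i, 2)) (Sum.inr j') = true := h
    simp only [adjS, decide_eq_true_eq] at h'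
    obtain ⟨k, hk⟩ := h'
    exact absurd hk (litV_ne_two _ _)

lemma fin3_cases (t : Fin 3) : t = 0 ∨ t = 1 ∨ t = 2 := by omega


def RS {nn m : ℕ} (Cl : Fin m → Fin 3 → Fin nn × Bool) (f : Fin nn → Bool)
    (k : Fin m → Fin 3) (v u : VS nn m) : Prop :=
  (∃ i : Fin nn, v = Sum.inl (i, 2) ∧ u = Sum.inl (i, if f i then 1 else 0)) ∨
  (∃ i : Fin nn, u = Sum.inl (i, 2) ∧ v = Sum.inl (i, if f i then 1 else 0)) ∨
  (∃ j : Fin m, v = Sum.inr j ∧ u = litV (Cl j (k j))) ∨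
  (∃ j : Fin m, u = Sum.inr j ∧ v = litV (Cl j (k j)))

/-- correctness of the (3,B2)-SAT reduction. The formula (clauses
`Cl`, each variable occurring exactly twice positively and twice negatively) is
satisfiable iff there is an undirected altruistic network (a symmetric neighborhood
system whose edges join `G`-adjacent vertices) making the target profile — all `y_j`
and all `b_i` invest, no `z_i` or `z̄_i` invests — a PSNE of the constructed BNPG
game with symmetric altruism (costs all `15`, altruism parameter `a = 2`). -/
theorem statement16 (nn m : ℕ) (Cl : Fin m → Fin 3 → Fin nn × Bool)
    (hpos : ∀ v : Fin nn,
      (Finset.univ.filter (fun jk : Fin m × Fin 3 => Cl jk.1 jk.2 = (v, true))).card = 2)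
    (hneg : ∀ v : Fin nn,
      (Finset.univ.filter (fun jk : Fin m × Fin 3 => Cl jk.1 jk.2 = (v, false))).card = 2) :
    (∃ f : Fin nn → Bool, ∀ j : Fin m, ∃ k : Fin 3, f (Cl j k).1 = (Cl j k).2) ↔
    (∃ N : VS nn m → Finset (VS nn m),
      (∀ v : VS nn m, ∀ u ∈ N v, (GS Cl).Adj v u) ∧
      (∀ u v : VS nn m, u ∈ N v ↔ v ∈ N u) ∧
      isPSNE (GS Cl) N gS (fun _ => 15) 2
        (fun v => match v with
          | Sum.inl (_, t) => decide (t = 2)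
          | Sum.inr _ => true)) := by
  classical
  constructor
  · rintro ⟨f, hf⟩
    choose k hk using hf
    have hmem : ∀ v u : VS nn m, u ∈ univ.filter (RS Cl f k v) ↔ RS Cl f k v u := by
      intro v u
      simp [Finset.mem_filter]
    have hAdj : ∀ v : VS nn m, ∀ u ∈ univ.filter (RS Cl f k v), (GS Cl).Adj v u := by
      intro v u hu
      rw [hmem] at hu
      unfold RS at hu
      rcases hu with ⟨i, rfl, rfl⟩ | ⟨i, rfl, rfl⟩ | ⟨j, rfl, rfl⟩ | ⟨j, rfl, rfl⟩
      · exact adj_bz Cl i (by cases f i <;> simp)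
      · exact ((GS Cl).adj_symm (adj_bz Cl i (by cases f i <;> simp)))
      · exact adj_yl Cl j (k j)
      · exact ((GS Cl).adj_symm (adj_yl Cl j (k j)))
    have hNy : ∀ j : Fin m, univ.filter (RS Cl f k (Sum.inr j)) = {litV (Cl j (k j))} := by
      intro j
      ext u
      rw [hmem, Finset.mem_singleton]
      unfold RS
      constructor
      · rintro (⟨i, h1, -⟩ | ⟨i, -, h1⟩ | ⟨j', h1, rfl⟩ | ⟨j', rfl, h1⟩)
        · exact absurd h1 (by simp)
        · exact absurd h1 (by simp)
        · cases Sum.inr.inj h1; rfl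
        · exact absurd h1 (by simp [litV])
      · rintro rfl
        exact Or.inr (Or.inr (Or.inl ⟨j, rfl, rfl⟩))
    have hNb : ∀ i : Fin nn, univ.filter (RS Cl f k (Sum.inl (i, 2)))
        = {(Sum.inl (i, if f i then 1 else 0) : VS nn m)} := by
      intro i
      ext u
      rw [hmem, Finset.mem_singleton]
      unfold RS
      constructor
      · rintro (⟨i', h1, rfl⟩ | ⟨i', rfl, h1⟩ | ⟨j', h1, -⟩ | ⟨j', rfl, h1⟩)
        · simp only [Sum.inl.injEq, Prod.mk.injEq] at h1
          obtain ⟨rfl, -⟩ := h1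
          rfl
        · exfalso
          simp only [Sum.inl.injEq, Prod.mk.injEq] at h1
          obtain ⟨rfl, h2⟩ := h1
          cases hfi : f i <;> rw [hfi] at h2 <;> simp at h2
        · exact absurd h1 (by simp)
        · exact absurd h1.symm (litV_ne_two _ _)
      · rintro rfl
        exact Or.inl ⟨i, rfl, rfl⟩
    have hNfal : ∀ i : Fin nn, univ.filter (RS Cl f k (Sum.inl (i, if f i then 1 else 0)))
        = {(Sum.inl (i, 2) : VS nn m)} := by
      intro i
      ext u
      rw [hmem, Finset.mem_singleton]
      unfold RS
      constructor
      · rintro (⟨i', h1, -⟩ | ⟨i', rfl, h1⟩ | ⟨j', h1, -⟩ | ⟨j', rfl, h1⟩)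
        · exfalso
          simp only [Sum.inl.injEq, Prod.mk.injEq] at h1
          obtain ⟨-, h2⟩ := h1
          cases hfi : f i <;> rw [hfi] at h2 <;> simp at h2
        · simp only [Sum.inl.injEq, Prod.mk.injEq] at h1
          obtain ⟨rfl, -⟩ := h1
          rfl
        · exact absurd h1 (by simp)
        · exfalso
          rcases hCl : Cl j' (k j') with ⟨v1, s⟩
          have hs : f v1 = s := by have h' := hk j'; rw [hCl] at h'; exact h'
          rw [hCl] at h1
          simp only [litV, Sum.inl.injEq, Prod.mk.injEq] at h1
          obtain ⟨rfl, h2⟩ := h1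
          rw [← hs] at h2
          cases hfi : f i <;> rw [hfi] at h2 <;> simp at h2
      · rintro rfl
        exact Or.inr (Or.inl ⟨i, rfl, rfl⟩)
    have hNsat : ∀ i : Fin nn, univ.filter (RS Cl f k (Sum.inl (i, if f i then 0 else 1)))
        = (univ.filter (fun j : Fin m => Cl j (k j) = (i, f i))).image Sum.inr := by
      intro i
      ext u
      rw [hmem, Finset.mem_image]
      unfold RS
      constructor
      · rintro (⟨i', h1, -⟩ | ⟨i', rfl, h1⟩ | ⟨j', h1, -⟩ | ⟨j', rfl, h1⟩)
        · exfalso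
          simp only [Sum.inl.injEq, Prod.mk.injEq] at h1
          obtain ⟨-, h2⟩ := h1
          cases hfi : f i <;> rw [hfi] at h2 <;> simp at h2
        · exfalso
          simp only [Sum.inl.injEq, Prod.mk.injEq] at h1
          obtain ⟨h1a, h2⟩ := h1
          subst h1a
          cases hfi : f i <;> rw [hfi] at h2 <;> simp at h2
        · exact absurd h1 (by simp)
        · refine ⟨j', ?_, rfl⟩
          refine Finset.mem_filter.2 ⟨Finset.mem_univ _, ?_⟩
          rcases hCl : Cl j' (k j') with ⟨v1, s⟩
          have hs : f v1 = s := by have h' := hk j'; rw [hCl] at h'; exact h'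
          rw [hCl] at h1
          simp only [litV, Sum.inl.injEq, Prod.mk.injEq] at h1
          obtain ⟨h1a, -⟩ := h1
          subst h1a
          rw [hs]
      · rintro ⟨j', hj', rfl⟩
        rw [Finset.mem_filter] at hj'
        refine Or.inr (Or.inr (Or.inr ⟨j', rfl, ?_⟩))
        rw [hj'.2]
        rfl
    refine ⟨fun v => univ.filter (RS Cl f k v), hAdj, ?_, ?_⟩
    · intro u v
      rw [hmem, hmem]
      unfold RS
      constructor <;>
      · rintro (h | h | h | h)
        · exact Or.inr (Or.inl h)
        · exact Or.inl h
        · exact Or.inr (Or.inr (Or.inr h))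
        · exact Or.inr (Or.inr (Or.inl h))
    · intro v b
      rw [ge_iff_le, ← sub_nonneg,
        util_diff (GS Cl) _ lamS gS gS_lam 15 (fun v : VS nn m => match v with
      | Sum.inl (_, t) => decide (t = 2)
      | Sum.inr _ => true) v (hAdj v) b]
      rcases v with ⟨i, t⟩ | j
      · rcases fin3_cases t with rfl | rfl | rfl
        · -- z_i
          cases hfi : f i
          · have h1 := hNfal i
            rw [hfi] at h1
            simp only [Bool.false_eq_true, if_false] at h1
            rw [h1, Finset.sum_singleton]
            cases b <;> norm_num [lamS, Fin.ext_iff]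
          · have h1 := hNsat i
            rw [hfi] at h1
            simp only [if_true] at h1
            rw [h1, Finset.sum_image (fun a _ b _ h => Sum.inr.inj h)]
            have hsum : ∑ j' ∈ univ.filter (fun j : Fin m => Cl j (k j) = (i, true)),
                lamS (Sum.inr j' : VS nn m)
                = ((univ.filter (fun j : Fin m => Cl j (k j) = (i, true))).card : ℝ) := by
              simp [lamS]
            have hcard : (univ.filter (fun j : Fin m => Cl j (k j) = (i, true))).card ≤ 2 := by
              rw [← hpos i]
              apply Finset.card_le_card_of_injOn (fun j => (j, k j))
              · intro j hj
                simp only [Finset.mem_coe, Finset.mem_filter, Finset.mem_univ, true_and] at hj ⊢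
                exact hj
              · intro a _ b _ h
                exact congrArg Prod.fst h
            rw [hsum]
            have hc2 : ((univ.filter (fun j : Fin m => Cl j (k j) = (i, true))).card : ℝ) ≤ 2 := by
              exact_mod_cast hcard
            cases b
            · norm_num [lamS, Fin.ext_iff]
            · norm_num [lamS, Fin.ext_iff]
              nlinarith [hc2]
        · -- z̄_i
          cases hfi : f i
          · have h1 := hNsat i
            rw [hfi] at h1
            simp only [Bool.false_eq_true, if_false] at h1
            rw [h1, Finset.sum_image (fun a _ b _ h => Sum.inr.inj h)]
            have hsum : ∑ j' ∈ univ.filter (fun j : Fin m => Cl j (k j) = (i, false)),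
                lamS (Sum.inr j' : VS nn m)
                = ((univ.filter (fun j : Fin m => Cl j (k j) = (i, false))).card : ℝ) := by
              simp [lamS]
            have hcard : (univ.filter (fun j : Fin m => Cl j (k j) = (i, false))).card ≤ 2 := by
              rw [← hneg i]
              apply Finset.card_le_card_of_injOn (fun j => (j, k j))
              · intro j hj
                simp only [Finset.mem_coe, Finset.mem_filter, Finset.mem_univ, true_and] at hj ⊢
                exact hj
              · intro a _ b _ h
                exact congrArg Prod.fst h
            rw [hsum]
            have hc2 : ((univ.filter (fun j : Fin m => Cl j (k j) = (i, false))).card : ℝ) ≤ 2 := by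
              exact_mod_cast hcard
            cases b
            · norm_num [lamS, Fin.ext_iff]
            · norm_num [lamS, Fin.ext_iff]
              nlinarith [hc2]
          · have h1 := hNfal i
            rw [hfi] at h1
            simp only [if_true] at h1
            rw [h1, Finset.sum_singleton]
            cases b <;> norm_num [lamS, Fin.ext_iff]
        · -- b_i
          rw [hNb i, Finset.sum_singleton]
          cases b
          · cases hfi : f i <;> norm_num [hfi, lamS, Fin.ext_iff]
          · cases hfi : f i <;> norm_num [hfi, lamS, Fin.ext_iff]
      · -- y_j
        rw [hNy j, Finset.sum_singleton]
        have hl : lamS (litV (Cl j (k j)) : VS nn m) = 10 := by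
          rcases hCl : Cl j (k j) with ⟨v1, s⟩
          cases s <;> simp [litV, lamS]
        rw [hl]
        cases b <;> norm_num [lamS, Fin.ext_iff]
  · rintro ⟨N, hAdj, hSym, hP⟩
    have key : ∀ (v : VS nn m) (b : Bool),
        0 ≤ ((((fun v : VS nn m => match v with
      | Sum.inl (_, t) => decide (t = 2)
      | Sum.inr _ => true) v).toNat : ℝ) - b.toNat)
          * (lamS v + 2 * ∑ u ∈ N v, lamS u - 15) := by
      intro v b
      have h := hP v b
      rw [ge_iff_le, ← sub_nonneg] at h
      rw [util_diff (GS Cl) N lamS gS gS_lam 15 (fun v : VS nn m => match v with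
      | Sum.inl (_, t) => decide (t = 2)
      | Sum.inr _ => true) v (hAdj v) b] at h
      exact h
    have F1 : ∀ j : Fin m, (N (Sum.inr j)).Nonempty := by
      intro j
      rw [Finset.nonempty_iff_ne_empty]
      intro hemp
      have h := key (Sum.inr j) false
      rw [hemp] at h
      norm_num [lamS, Fin.ext_iff] at h
    have F2 : ∀ i : Fin nn, ∃ t : Fin 3, (t = 0 ∨ t = 1) ∧
        Sum.inl (i, t) ∈ N (Sum.inl (i, 2)) := by
      intro i
      have hne : (N (Sum.inl (i, 2))).Nonempty := by
        rw [Finset.nonempty_iff_ne_empty]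
        intro hemp
        have h := key (Sum.inl (i, 2)) false
        rw [hemp] at h
        norm_num [lamS, Fin.ext_iff] at h
      obtain ⟨u, hu⟩ := hne
      obtain ⟨t, ht, rfl⟩ := adj_b_elim (hAdj _ u hu)
      exact ⟨t, ht, hu⟩
    have F3 : ∀ (i : Fin nn) (t : Fin 3), (t = 0 ∨ t = 1) →
        Sum.inl (i, 2) ∈ N (Sum.inl (i, t)) →
        ∀ j : Fin m, Sum.inr j ∉ N (Sum.inl (i, t)) := by
      intro i t ht hb j hj
      have h := key (Sum.inl (i, t)) true
      have hsub : ({Sum.inl (i, 2), Sum.inr j} : Finset (VS nn m)) ⊆ N (Sum.inl (i, t)) := by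
        intro u hu
        rcases Finset.mem_insert.1 hu with rfl | hu
        · exact hb
        · rw [Finset.mem_singleton] at hu
          subst hu
          exact hj
      have hsum : (3 : ℝ) ≤ ∑ u ∈ N (Sum.inl (i, t)), lamS u := by
        have h3 := Finset.sum_le_sum_of_subset_of_nonneg hsub (fun u _ _ => lamS_nonneg u)
        rw [Finset.sum_pair (by simp)] at h3
        have h4 : lamS (Sum.inl (i, 2) : VS nn m) + lamS (Sum.inr j : VS nn m) = 3 := by
          norm_num [lamS, Fin.ext_iff]
        linarith
      have hv : lamS (Sum.inl (i, t) : VS nn m) = 10 := by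
        rcases ht with rfl | rfl <;> norm_num [lamS, Fin.ext_iff]
      have hx : ((fun v : VS nn m => match v with
          | Sum.inl (_, t) => decide (t = 2)
          | Sum.inr _ => true) (Sum.inl (i, t))) = false := by
        show decide (t = 2) = false
        rcases ht with rfl | rfl <;> norm_num [Fin.ext_iff]
      rw [hx, hv] at h
      norm_num at h
      linarith [hsum, h]
    refine ⟨fun i => decide (Sum.inl (i, 1) ∈ N (Sum.inl (i, 2))), ?_⟩
    intro j
    obtain ⟨u, hu⟩ := F1 j
    obtain ⟨kk, rfl⟩ := adj_y_elim (hAdj _ u hu)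
    refine ⟨kk, ?_⟩
    rcases hCl : Cl j kk with ⟨i, s⟩
    rw [hCl] at hu
    have hyz : Sum.inr j ∈ N (Sum.inl (i, if s then 0 else 1)) := (hSym _ _).1 hu
    have hnb : Sum.inl (i, 2) ∉ N (Sum.inl (i, if s then 0 else 1)) := by
      intro hbmem
      exact F3 i _ (by cases s <;> simp) hbmem j hyz
    have hnb' : (Sum.inl (i, if s then 0 else 1) : VS nn m) ∉ N (Sum.inl (i, 2)) := by
      intro hmem2
      exact hnb ((hSym _ _).1 hmem2)
    obtain ⟨t', ht', hmem⟩ := F2 i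
    cases s
    · simp only [Bool.false_eq_true, if_false] at hnb'
      simp only [decide_eq_false_iff_not]
      exact hnb'
    · simp only [if_true] at hnb'
      have ht1 : t' = 1 := by
        rcases ht' with rfl | rfl
        · exact absurd hmem hnb'
        · rfl
      subst ht1
      simp only [decide_eq_true_eq]
      exact hmem
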